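/- Let f = 1_{[0,1]} be the uniform density on [0,1]. Then the essential supremum of f ∗ f equals the essential supremum of f (both equal 1), so N_∞(X+Y) = N_∞(X) for X, Y independent and uniform on [0,1], where N_∞(f) = ‖f‖_∞^{-2}. Consequently, for every α > 0 the inequality N_∞^α(X+Y) ≥ N_∞^α(X) + N_∞^α(Y) fails for this pair. -/

import Mathlib

open MeasureTheory

lemma conv_eval (x : ℝ) :
    (∫ y, (Set.Icc (0:ℝ) 1).indicator (fun _ => (1:ℝ)) (x - y) *
      (Set.Icc (0:ℝ) 1).indicator (fun _ => (1:ℝ)) y)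
    = max (min x 1 - max (x-1) 0) 0 := by
  have h : (fun y => (Set.Icc (0:ℝ) 1).indicator (fun _ => (1:ℝ)) (x - y) *
      (Set.Icc (0:ℝ) 1).indicator (fun _ => (1:ℝ)) y)
      = (Set.Icc (max (x-1) 0) (min x 1)).indicator (1 : ℝ → ℝ) := by
    funext y
    by_cases hy : y ∈ Set.Icc (max (x-1) 0) (min x 1)
    · rw [Set.mem_Icc] at hy
      obtain ⟨h1, h2⟩ := hy
      have ha1 : max (x-1) 0 ≤ y := h1
      have ha2 : y ≤ min x 1 := h2
      have hx1 : x - 1 ≤ y := le_trans (le_max_left _ _) h1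
      have hx0 : 0 ≤ y := le_trans (le_max_right _ _) h1
      have hy1 : y ≤ x := le_trans h2 (min_le_left _ _)
      have hy2 : y ≤ 1 := le_trans h2 (min_le_right _ _)
      rw [Set.indicator_of_mem (Set.mem_Icc.mpr ⟨hx0, hy2⟩),
        Set.indicator_of_mem (Set.mem_Icc.mpr ⟨by linarith, by linarith⟩),
        Set.indicator_of_mem (Set.mem_Icc.mpr ⟨h1, h2⟩)]
      norm_num
    · rw [Set.indicator_of_notMem hy]
      rcases Classical.em (y ∈ Set.Icc (0:ℝ) 1) with hy0 | hy0
      · rcases Classical.em (x - y ∈ Set.Icc (0:ℝ) 1) with hxy | hxy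
        · rw [Set.mem_Icc] at hy0 hxy
          exact absurd (Set.mem_Icc.mpr ⟨max_le (by linarith [hxy.2]) hy0.1,
            le_min (by linarith [hxy.1]) hy0.2⟩) hy
        · rw [Set.indicator_of_notMem hxy]; ring
      · rw [Set.indicator_of_notMem hy0]; ring
  rw [h, integral_indicator_one measurableSet_Icc, measureReal_def, Real.volume_Icc,
    ENNReal.toReal_ofReal']

lemma essSup_eq_one_of (g : ℝ → ℝ) (hge : ∀ x, 0 ≤ g x) (hle : ∀ x, g x ≤ 1)
    (hbig : ∀ a : ℝ, a < 1 → (volume {x | a ≤ g x}) ≠ 0) :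
    essSup g (volume : Measure ℝ) = 1 := by
  haveI : (ae (volume : Measure ℝ)).NeBot := ae_neBot.mpr (NeZero.ne _)
  have hb : Filter.IsBoundedUnder (· ≤ ·) (ae (volume : Measure ℝ)) g :=
    Filter.isBoundedUnder_of ⟨1, hle⟩
  have hb' : Filter.IsBoundedUnder (· ≥ ·) (ae (volume : Measure ℝ)) g :=
    Filter.isBoundedUnder_of ⟨0, hge⟩
  refine le_antisymm
    (Filter.limsup_le_of_le hb'.isCoboundedUnder_le (Filter.Eventually.of_forall hle)) ?_
  refine le_of_forall_lt fun a ha => ?_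
  rcases exists_between ha with ⟨b, hab, hb1⟩
  have hfreq : ∃ᶠ x in ae (volume : Measure ℝ), b ≤ g x := by
    rw [MeasureTheory.frequently_ae_iff]
    exact hbig b hb1
  exact lt_of_lt_of_le hab (Filter.le_limsup_of_frequently_le hfreq hb)

/-- For `f = 1_{[0,1]}` the uniform density on `[0,1]`: the essential supremum
of `f ∗ f` equals that of `f` (both equal `1`), so `N_∞(X+Y) = N_∞(X)` for
`X, Y` independent uniform on `[0,1]`, where `N_∞(h) = ‖h‖_∞^(-2)`.
Consequently, for every `α > 0` the inequality
`N_∞^α(X+Y) ≥ N_∞^α(X) + N_∞^α(Y)` fails for this pair. -/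
theorem renyi_infinity_epi_fails
    (f : ℝ → ℝ) (hf : f = (Set.Icc (0 : ℝ) 1).indicator fun _ => (1 : ℝ)) :
    essSup (fun x => ∫ y, f (x - y) * f y) (volume : Measure ℝ) =
      essSup f (volume : Measure ℝ) ∧
    essSup f (volume : Measure ℝ) = 1 ∧
    ∀ α : ℝ, 0 < α →
      ¬ ((essSup (fun x => ∫ y, f (x - y) * f y) (volume : Measure ℝ) ^ (-2 : ℝ)) ^ α ≥
          (essSup f (volume : Measure ℝ) ^ (-2 : ℝ)) ^ α +
            (essSup f (volume : Measure ℝ) ^ (-2 : ℝ)) ^ α) := by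
  subst hf
  set f : ℝ → ℝ := (Set.Icc (0 : ℝ) 1).indicator fun _ => (1 : ℝ) with hf
  have hfc : (fun x => ∫ y, f (x - y) * f y) = fun x => max (min x 1 - max (x-1) 0) 0 := by
    funext x; exact conv_eval x
  have h1 : essSup f (volume : Measure ℝ) = 1 := by
    refine essSup_eq_one_of _ (fun x => Set.indicator_nonneg (fun _ _ => zero_le_one) x)
      (fun x => ?_) (fun a ha => ?_)
    · rw [hf]
      by_cases hx : x ∈ Set.Icc (0:ℝ) 1
      · rw [Set.indicator_of_mem hx]
      · rw [Set.indicator_of_notMem hx]; norm_num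
    · have hsub : Set.Icc (0:ℝ) 1 ⊆ {x | a ≤ f x} := by
        intro x hx
        simp only [Set.mem_setOf_eq, hf, Set.indicator_of_mem hx]
        linarith
      intro h0
      have := measure_mono (μ := (volume : Measure ℝ)) hsub
      rw [h0] at this
      simp only [Real.volume_Icc, nonpos_iff_eq_zero, ENNReal.ofReal_eq_zero] at this
      linarith
  have h2 : essSup (fun x => ∫ y, f (x - y) * f y) (volume : Measure ℝ) = 1 := by
    rw [hfc]
    refine essSup_eq_one_of _ (fun x => le_max_right _ _) (fun x => ?_) (fun a ha => ?_)
    · have := min_le_right x 1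
      have := le_max_right (x-1) (0:ℝ)
      exact max_le (by linarith) (by norm_num)
    · have hb0 : (0:ℝ) ≤ max a 0 := le_max_right _ _
      have hb1 : max a 0 < 1 := max_lt ha one_pos
      have hsub : Set.Ioc (max a 0) 1 ⊆ {x | a ≤ max (min x 1 - max (x-1) 0) 0} := by
        intro x hx
        rw [Set.mem_Ioc] at hx
        obtain ⟨hx1, hx2⟩ := hx
        have hmin : min x 1 = x := min_eq_left hx2
        have hmax : max (x-1) 0 = 0 := max_eq_right (by linarith)
        simp only [Set.mem_setOf_eq, hmin, hmax, sub_zero]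
        exact le_trans (le_trans (le_max_left a 0) hx1.le) (le_max_left _ _)
      intro h0
      have := measure_mono (μ := (volume : Measure ℝ)) hsub
      rw [h0] at this
      simp only [Real.volume_Ioc, nonpos_iff_eq_zero, ENNReal.ofReal_eq_zero] at this
      linarith
  refine ⟨by rw [h1, h2], h1, fun α hα => ?_⟩
  rw [h1, h2]
  simp only [Real.one_rpow]
  norm_num
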